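/- Counting inequality for split partitions: let m be a positive integer, let k ≥ 1, and let t_1,…,t_k and s_1,…,s_k be natural numbers with s_i ≤ t_i for every i. Set n := t_1 + … + t_k and s := s_1 + … + s_k. Then Σ_{i=1}^k [ C(t_i, m) − C(s_i, m) − C(t_i − s_i, m) ] ≤ C(n, m) − C(s, m) − C(n − s, m), where C(a,b) denotes the binomial coefficient (equal to 0 when b > a). -/

import Mathlib

open Finset

private lemma choose_superadd (a b i : ℕ) (hi : 1 ≤ i) :
    a.choose i + b.choose i ≤ (a + b).choose i := by
  rw [Nat.add_choose_eq]
  have hsub : ({(i, 0), (0, i)} : Finset (ℕ × ℕ)) ⊆ Finset.HasAntidiagonal.antidiagonal i := by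
    intro x hx
    simp only [mem_insert, mem_singleton] at hx
    rcases hx with h | h <;> simp [h]
  calc a.choose i + b.choose i
      = ∑ ij ∈ ({(i, 0), (0, i)} : Finset (ℕ × ℕ)), a.choose ij.1 * b.choose ij.2 := by
        rw [Finset.sum_pair (by simp; omega)]; simp
    _ ≤ ∑ ij ∈ Finset.HasAntidiagonal.antidiagonal i, a.choose ij.1 * b.choose ij.2 :=
        Finset.sum_le_sum_of_subset hsub

private lemma core (m : ℕ) (hm : 1 ≤ m) (s1 u1 s2 u2 : ℕ) :
    (s1 + u1).choose m + (s2 + u2).choose m + (s1 + s2).choose m + (u1 + u2).choose m ≤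
      (s1 + u1 + (s2 + u2)).choose m +
        (s1.choose m + s2.choose m + (u1.choose m + u2.choose m)) := by
  have hbig : s1 + u1 + (s2 + u2) = (s1 + s2) + (u1 + u2) := by ring
  rw [hbig, Nat.add_choose_eq s1 u1, Nat.add_choose_eq s2 u2,
      Nat.add_choose_eq (s1 + s2) (u1 + u2)]
  set F : ℕ × ℕ → ℕ := fun ij =>
    s1.choose ij.1 * u1.choose ij.2 + s2.choose ij.1 * u2.choose ij.2 +
      ((if ij = (m, 0) then (s1 + s2).choose m else 0) +
       (if ij = (0, m) then (u1 + u2).choose m else 0)) with hF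
  set G : ℕ × ℕ → ℕ := fun ij =>
    (s1 + s2).choose ij.1 * (u1 + u2).choose ij.2 +
      ((if ij = (m, 0) then s1.choose m + s2.choose m else 0) +
       (if ij = (0, m) then u1.choose m + u2.choose m else 0)) with hG
  have hmem1 : ((m, 0) : ℕ × ℕ) ∈ Finset.HasAntidiagonal.antidiagonal m := by simp
  have hmem2 : ((0, m) : ℕ × ℕ) ∈ Finset.HasAntidiagonal.antidiagonal m := by simp
  have hFsum : ∑ ij ∈ Finset.HasAntidiagonal.antidiagonal m, F ij =
      (∑ ij ∈ Finset.HasAntidiagonal.antidiagonal m, s1.choose ij.1 * u1.choose ij.2) +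
      (∑ ij ∈ Finset.HasAntidiagonal.antidiagonal m, s2.choose ij.1 * u2.choose ij.2) +
      ((s1 + s2).choose m + (u1 + u2).choose m) := by
    simp only [hF, Finset.sum_add_distrib, Finset.sum_ite_eq' (Finset.HasAntidiagonal.antidiagonal m),
      hmem1, hmem2, if_true]
  have hGsum : ∑ ij ∈ Finset.HasAntidiagonal.antidiagonal m, G ij =
      (∑ ij ∈ Finset.HasAntidiagonal.antidiagonal m, (s1 + s2).choose ij.1 * (u1 + u2).choose ij.2) +
      ((s1.choose m + s2.choose m) + (u1.choose m + u2.choose m)) := by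
    simp only [hG, Finset.sum_add_distrib, Finset.sum_ite_eq' (Finset.HasAntidiagonal.antidiagonal m),
      hmem1, hmem2, if_true]
  have hle : ∀ ij ∈ Finset.HasAntidiagonal.antidiagonal m, F ij ≤ G ij := by
    rintro ⟨i, j⟩ hij
    rw [Finset.HasAntidiagonal.mem_antidiagonal] at hij
    have hne : ((m, 0) : ℕ × ℕ) ≠ (0, m) := by simp; omega
    by_cases h1 : (i, j) = ((m, 0) : ℕ × ℕ)
    · rw [h1]
      simp [hF, hG, hne]
      omega
    · by_cases h2 : (i, j) = ((0, m) : ℕ × ℕ)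
      · rw [h2]
        simp [hF, hG, hne.symm]
        omega
      · have hi : 1 ≤ i := by
          rcases Nat.eq_zero_or_pos i with h | h
          · exfalso; exact h2 (by simp [h, ← hij, h])
          · exact h
        have hj : 1 ≤ j := by
          rcases Nat.eq_zero_or_pos j with h | h
          · exfalso; exact h1 (by subst h; simp at hij ⊢; omega)
          · exact h
        simp only [hF, hG, if_neg h1, if_neg h2, add_zero]
        have kA := choose_superadd s1 s2 i hi
        have kB := choose_superadd u1 u2 j hj
        calc s1.choose i * u1.choose j + s2.choose i * u2.choose j
            ≤ (s1.choose i + s2.choose i) * (u1.choose j + u2.choose j) := by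
              nlinarith [Nat.zero_le (s1.choose i * u2.choose j),
                Nat.zero_le (s2.choose i * u1.choose j)]
          _ ≤ (s1 + s2).choose i * (u1 + u2).choose j :=
              Nat.mul_le_mul kA kB
  have := Finset.sum_le_sum hle
  rw [hFsum, hGsum] at this
  omega

private lemma f_superadd (m : ℕ) (hm : 1 ≤ m) (a b c d : ℕ) (hba : b ≤ a) (hdc : d ≤ c) :
    ((a.choose m : ℤ) - b.choose m - ((a - b).choose m : ℤ)) +
      ((c.choose m : ℤ) - d.choose m - ((c - d).choose m : ℤ)) ≤
    (((a + c).choose m : ℤ) - ((b + d).choose m : ℤ) - (((a + c) - (b + d)).choose m : ℤ)) := by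
  have h1 : a = b + (a - b) := by omega
  have h2 : c = d + (c - d) := by omega
  have h3 : (a + c) - (b + d) = (a - b) + (c - d) := by omega
  have h4 : a + c = b + (a - b) + (d + (c - d)) := by omega
  have := core m hm b (a - b) d (c - d)
  rw [← h1, ← h2] at this
  rw [h3]
  push_cast
  linarith [this]

/-- Counting inequality for split partitions: if `sᵢ ≤ tᵢ`, `n = Σ tᵢ` and `s = Σ sᵢ`,
then `Σᵢ [C(tᵢ,m) - C(sᵢ,m) - C(tᵢ-sᵢ,m)] ≤ C(n,m) - C(s,m) - C(n-s,m)`. -/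
theorem split_partition_counting (m : ℕ) (hm : 1 ≤ m) (k : ℕ) (hk : 1 ≤ k)
    (t s : Fin k → ℕ) (hst : ∀ i, s i ≤ t i) :
    ∑ i, (((t i).choose m : ℤ) - ((s i).choose m : ℤ) - (((t i - s i).choose m : ℤ))) ≤
      (((∑ i, t i).choose m : ℤ) - ((∑ i, s i).choose m : ℤ) -
        (((∑ i, t i) - (∑ i, s i)).choose m : ℤ)) := by
  have main : ∀ (A : Finset (Fin k)), (∀ i ∈ A, s i ≤ t i) →
      ∑ i ∈ A, (((t i).choose m : ℤ) - ((s i).choose m : ℤ) - (((t i - s i).choose m : ℤ))) ≤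
        (((∑ i ∈ A, t i).choose m : ℤ) - ((∑ i ∈ A, s i).choose m : ℤ) -
          (((∑ i ∈ A, t i) - (∑ i ∈ A, s i)).choose m : ℤ)) := by
    intro A
    induction A using Finset.cons_induction with
    | empty =>
        intro _
        simp [Nat.choose_eq_zero_of_lt hm]
    | cons a A ha ih =>
        intro h
        have hst' : ∀ i ∈ A, s i ≤ t i := fun i hi => h i (Finset.mem_cons_of_mem hi)
        have hsum : ∑ i ∈ A, s i ≤ ∑ i ∈ A, t i := Finset.sum_le_sum hst'
        rw [Finset.sum_cons, Finset.sum_cons, Finset.sum_cons]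
        calc _ ≤ (((t a).choose m : ℤ) - ((s a).choose m : ℤ) - (((t a - s a).choose m : ℤ)))
              + (((∑ i ∈ A, t i).choose m : ℤ) - ((∑ i ∈ A, s i).choose m : ℤ) -
                  (((∑ i ∈ A, t i) - (∑ i ∈ A, s i)).choose m : ℤ)) := by
              linarith [ih hst']
          _ ≤ _ := f_superadd m hm (t a) (s a) (∑ i ∈ A, t i) (∑ i ∈ A, s i)
                (h a (Finset.mem_cons_self a A)) hsum
  exact main Finset.univ (fun i _ => hst i)
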